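/- For a maximizing sequence of the ratio R(a) = (Σ_k a_k)/(Σ_k max(k·a_k,1)) over a ∈ [0,1]^n, the sequence is weakly decreasing: if k < k' then a_k ≥ a_{k'}. -/

import Mathlib

/-- Key supermodularity inequality: swapping mismatched values strictly
decreases the denominator contribution, in the case `1 < c' * x'`. -/
lemma swap_key (c c' x x' : ℝ) (hc : 0 ≤ c) (hcc : c < c') (hx : 0 ≤ x)
    (hxx : x < x') (h1 : 1 < c' * x') :
    max (c * x') 1 + max (c' * x) 1 < max (c * x) 1 + max (c' * x') 1 := by
  have hc' : 0 < c' := lt_of_le_of_lt hc hcc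
  have hx' : 0 < x' := by nlinarith
  rw [max_eq_left h1.le]
  rcases le_or_gt (c * x') 1 with h2 | h2
  · rw [max_eq_right h2]
    rcases le_or_gt (c' * x) 1 with h3 | h3
    · rw [max_eq_right h3]
      have : (1:ℝ) ≤ max (c * x) 1 := le_max_right _ _
      linarith
    · rw [max_eq_left h3.le]
      have h4 : c' * x < c' * x' := by nlinarith
      have : (1:ℝ) ≤ max (c * x) 1 := le_max_right _ _
      linarith
  · rw [max_eq_left h2.le]
    rcases le_or_gt (c' * x) 1 with h3 | h3
    · rw [max_eq_right h3]
      have h4 : c * x' < c' * x' := by nlinarith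
      have : (1:ℝ) ≤ max (c * x) 1 := le_max_right _ _
      linarith
    · rw [max_eq_left h3.le]
      have : c * x ≤ max (c * x) 1 := le_max_left _ _
      nlinarith

/-- Observation 2: a sequence `a ∈ [0,1]^n` maximizing the ratio
`(Σ_k a_k)/(Σ_k max(k·a_k, 1))` is weakly decreasing. -/
theorem maximizer_weakly_decreasing (n : ℕ) (hn : 2 ≤ n) (a : Fin n → ℝ)
    (ha : ∀ k, a k ∈ Set.Icc (0 : ℝ) 1)
    (hmax : ∀ b : Fin n → ℝ, (∀ k, b k ∈ Set.Icc (0 : ℝ) 1) →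
      (∑ k, b k) / (∑ k : Fin n, max ((k : ℝ) * b k) 1) ≤
      (∑ k, a k) / (∑ k : Fin n, max ((k : ℝ) * a k) 1)) :
    ∀ k k' : Fin n, k < k' → a k' ≤ a k := by
  intro k k' hkk'
  by_contra hcon
  push_neg at hcon
  have hne : k ≠ k' := ne_of_lt hkk'
  have hcast : (k : ℝ) < (k' : ℝ) := by exact_mod_cast hkk'
  have hk0 : (0:ℝ) ≤ (k : ℝ) := by positivity
  have hak0 : 0 ≤ a k := (ha k).1
  have hak'1 : a k' ≤ 1 := (ha k').2
  haveI : Nonempty (Fin n) := ⟨⟨0, by omega⟩⟩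
  -- the denominator of `a` is positive
  have hDENa : (0:ℝ) < ∑ j : Fin n, max ((j : ℝ) * a j) 1 :=
    Finset.sum_pos (fun j _ => lt_of_lt_of_le one_pos (le_max_right _ _))
      Finset.univ_nonempty
  rcases le_or_gt ((k' : ℝ) * a k') 1 with hcase | hcase
  · -- Case A: `k' * a k' ≤ 1`.  Raise `a k` to `a k'`: numerator strictly
    -- increases, denominator is unchanged.
    set b : Fin n → ℝ := Function.update a k (a k') with hb
    have hbmem : ∀ j, b j ∈ Set.Icc (0 : ℝ) 1 := by
      intro j
      by_cases hj : j = k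
      · subst hj; simp [hb, ha k']
      · simp [hb, Function.update_of_ne hj, ha j]
    have hkak' : (k : ℝ) * a k' ≤ 1 := by nlinarith
    have hkak : (k : ℝ) * a k ≤ 1 := by nlinarith
    have hDENeq : (∑ j : Fin n, max ((j : ℝ) * b j) 1)
        = ∑ j : Fin n, max ((j : ℝ) * a j) 1 := by
      apply Finset.sum_congr rfl
      intro j _
      by_cases hj : j = k
      · subst hj
        simp [hb, max_eq_right hkak', max_eq_right hkak]
      · simp [hb, Function.update_of_ne hj]
    have hNUMlt : (∑ j, a j) < ∑ j, b j := by
      have h1 : (∑ j, b j) = a k' + ∑ j ∈ Finset.univ.erase k, a j := by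
        rw [Finset.sum_update_of_mem (Finset.mem_univ k),
          Finset.sdiff_singleton_eq_erase]
      have h2 : (∑ j, a j) = a k + ∑ j ∈ Finset.univ.erase k, a j :=
        (Finset.add_sum_erase _ a (Finset.mem_univ k)).symm
      rw [h1, h2]
      linarith
    have h := hmax b hbmem
    rw [hDENeq, div_le_div_iff_of_pos_right hDENa] at h
    linarith
  · -- Case B: `1 < k' * a k'`.  Swap the entries at `k` and `k'`:
    -- numerator is unchanged, denominator strictly decreases.
    set b : Fin n → ℝ := fun j => a (Equiv.swap k k' j) with hb
    have hbmem : ∀ j, b j ∈ Set.Icc (0 : ℝ) 1 := fun j => ha _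
    have hNUMeq : (∑ j, b j) = ∑ j, a j := Equiv.sum_comp (Equiv.swap k k') a
    have hNUMpos : (0:ℝ) < ∑ j, a j := by
      have h1 : a k' ≤ ∑ j, a j :=
        Finset.single_le_sum (fun j _ => (ha j).1) (Finset.mem_univ k')
      linarith
    set f : Fin n → ℝ := fun j => max ((j : ℝ) * a j) 1 with hf
    set g : Fin n → ℝ := fun j => max ((j : ℝ) * b j) 1 with hg
    have hDENb : (0:ℝ) < ∑ j, g j :=
      Finset.sum_pos (fun j _ => lt_of_lt_of_le one_pos (le_max_right _ _))
        Finset.univ_nonempty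
    have hDENlt : (∑ j, g j) < ∑ j, f j := by
      have hdiff : (∑ j, f j) - (∑ j, g j) = ∑ j, (f j - g j) :=
        (Finset.sum_sub_distrib f g).symm
      have hrestrict : (∑ j, (f j - g j))
          = ∑ j ∈ ({k, k'} : Finset (Fin n)), (f j - g j) := by
        refine (Finset.sum_subset (Finset.subset_univ _) ?_).symm
        intro j _ hj
        simp only [Finset.mem_insert, Finset.mem_singleton, not_or] at hj
        have : b j = a j := by
          simp [hb, Equiv.swap_apply_of_ne_of_ne hj.1 hj.2]
        simp [hf, hg, this]
      have hgk : g k = max ((k : ℝ) * a k') 1 := by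
        simp [hg, hb, Equiv.swap_apply_left]
      have hgk' : g k' = max ((k' : ℝ) * a k) 1 := by
        simp [hg, hb, Equiv.swap_apply_right]
      have hpair : (∑ j ∈ ({k, k'} : Finset (Fin n)), (f j - g j))
          = (f k - g k) + (f k' - g k') := Finset.sum_pair hne
      have hkey := swap_key (k : ℝ) (k' : ℝ) (a k) (a k') hk0 hcast hak0 hcon hcase
      have : (0:ℝ) < (∑ j, f j) - (∑ j, g j) := by
        rw [hdiff, hrestrict, hpair, hgk, hgk']
        simp only [hf]
        linarith
      linarith
    have h := hmax b hbmem
    rw [hNUMeq] at h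
    have h2 : (∑ j, a j) / (∑ j, f j) < (∑ j, a j) / (∑ j, g j) :=
      div_lt_div_of_pos_left hNUMpos hDENb hDENlt
    simp only [hf, hg] at h2
    linarith
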